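/- Let A ∈ SL(2, ℤ) and v ∈ ℤ², v ≠ 0. If the sequence (A^n v)_{n∈ℕ} is unbounded, then ‖A^n v‖ → ∞ as n → ∞. -/

import Mathlib

/-- Let A ∈ SL(2, ℤ) and v ∈ ℤ², v ≠ 0.  If the sequence (Aⁿ v) is unbounded, then
‖Aⁿ v‖ → ∞ as n → ∞. -/
theorem stmt_9 (A : Matrix (Fin 2) (Fin 2) ℤ) (hA : A.det = 1)
    (v : Fin 2 → ℤ) (hv : v ≠ 0)
    (hub : ¬ ∃ C : ℝ, ∀ n : ℕ, ‖(A ^ n).mulVec v‖ ≤ C) :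
    Filter.Tendsto (fun n : ℕ => ‖(A ^ n).mulVec v‖) Filter.atTop Filter.atTop := by
  set f : ℕ → (Fin 2 → ℤ) := fun n => (A ^ n).mulVec v with hf
  by_contra h
  rw [Filter.tendsto_atTop] at h
  push_neg at h
  obtain ⟨C, hC⟩ := h
  replace hC : ∃ᶠ n in Filter.atTop, ¬ C ≤ ‖f n‖ := hC.mono fun n hn => not_le.mpr hn
  have hinf : {n : ℕ | ¬ C ≤ ‖f n‖}.Infinite := by
    rwa [← Nat.frequently_atTop_iff_infinite]
  -- integer vectors of norm < C form a finite set
  have hfin : (Metric.closedBall (0 : Fin 2 → ℤ) C).Finite :=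
    (isCompact_closedBall _ _).finite_of_discrete
  have hmaps : Set.MapsTo f {n : ℕ | ¬ C ≤ ‖f n‖} (Metric.closedBall 0 C) := by
    intro n hn
    simp only [Set.mem_setOf_eq, not_le] at hn
    simpa [Metric.mem_closedBall, dist_zero_right] using hn.le
  obtain ⟨a, -, b, -, hab, heq⟩ := hinf.exists_ne_map_eq_of_mapsTo hmaps hfin
  wlog hlt : a < b generalizing a b
  · exact this b a hab.symm heq.symm ((hab.lt_or_gt).resolve_left hlt)
  set d := b - a with hd
  have hd0 : 0 < d := Nat.sub_pos_of_lt hlt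
  have hper : (A ^ d).mulVec (f a) = f a := by
    simp only [f]
    rw [Matrix.mulVec_mulVec, ← pow_add, show d + a = b by omega]
    exact heq.symm
  have hperq : ∀ q : ℕ, (A ^ (d * q)).mulVec (f a) = f a := by
    intro q
    induction q with
    | zero => simp
    | succ q ih =>
      rw [Nat.mul_succ, pow_add, ← Matrix.mulVec_mulVec, hper, ih]
  -- eventual periodicity
  have h1 : ∀ j : ℕ, f (a + j) = (A ^ j).mulVec (f a) := by
    intro j
    simp only [f]
    rw [Matrix.mulVec_mulVec, ← pow_add, Nat.add_comm]
  have hkey : ∀ k : ℕ, f (a + k) = f (a + k % d) := by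
    intro k
    rw [h1, h1]
    conv_lhs => rw [(Nat.mod_add_div k d).symm]
    rw [pow_add, ← Matrix.mulVec_mulVec, hperq]
  -- every value of f is a value of f on [0, b)
  have hb0 : 0 < b := lt_of_le_of_lt (Nat.zero_le a) hlt
  have hbound : ∀ k : ℕ, ∃ j < b, f k = f j := by
    intro k
    by_cases hk : k < b
    · exact ⟨k, hk, rfl⟩
    · have hka : a ≤ k := le_trans hlt.le (not_lt.mp hk)
      refine ⟨a + (k - a) % d, ?_, ?_⟩
      · have := Nat.mod_lt (k - a) hd0; omega
      · have := hkey (k - a)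
        rwa [Nat.add_sub_cancel' hka] at this
  apply hub
  refine ⟨((Finset.range b).image (fun j => ‖f j‖)).max' ?_, ?_⟩
  · exact (Finset.nonempty_range_iff.mpr hb0.ne').image _
  · intro k
    obtain ⟨j, hj, hjeq⟩ := hbound k
    have : ‖f j‖ ∈ (Finset.range b).image (fun j => ‖f j‖) :=
      Finset.mem_image_of_mem _ (Finset.mem_range.mpr hj)
    calc ‖f k‖ = ‖f j‖ := by rw [hjeq]
    _ ≤ _ := Finset.le_max' _ _ this
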